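/- Let a, b, c > 0 with c ≤ a + b. There exists a constant C > 0, depending only on a, with the following property. For every t ≥ 0 and every A : ℝ²_+ → ℝ such that for a.e. x the function y ↦ A(x,y) is C¹ on [0,∞) with A(x,y) → 0 as y → ∞ and A(x,y) = −∫_y^∞ ∂_y A(x,y') dy', and such that e^{aΨ(t,·)} ∂_y A ∈ L²(ℝ²_+), one has for every y ≥ 0: (∫_ℝ e^{2(c−b)Ψ(t,y)} A(x,y)² dx)^{1/2} ≤ C ⟨t⟩^{1/4} (∫_{ℝ²_+} e^{2aΨ(t,y')} (∂_y A(x,y'))² dx dy')^{1/2}. -/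

import Mathlib

open MeasureTheory Real Set Filter Topology
open scoped ENNReal NNReal

/-- The weight `Ψ(t,y) = y² / (8⟨t⟩)` with `⟨t⟩ = 1 + t`. -/
noncomputable def Psi (t y : ℝ) : ℝ := y ^ 2 / (8 * (1 + t))

/-- The half-plane `ℝ²_+ = {(x,y) : 0 < y}`. -/
def halfPlane : Set (ℝ × ℝ) := {p | 0 < p.2}

/-- Gaussian tail bound. -/
lemma gauss_tail (α y : ℝ) (hα : 0 < α) (hy : 0 ≤ y) :
    (∫⁻ y' in Ioi y, ENNReal.ofReal (exp (-(α * y' ^ 2))))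
      ≤ ENNReal.ofReal (exp (-(α * y ^ 2)) * Real.sqrt (π / α)) := by
  have hcont : Continuous fun y' : ℝ => exp (-(α * (y' - y) ^ 2)) := by continuity
  have h1 : (∫⁻ y' in Ioi y, ENNReal.ofReal (exp (-(α * y' ^ 2))))
      ≤ ∫⁻ y' in Ioi y,
          ENNReal.ofReal (exp (-(α * y ^ 2))) * ENNReal.ofReal (exp (-(α * (y' - y) ^ 2))) := by
    refine setLIntegral_mono (by measurability) ?_
    intro y' hy'
    rw [← ENNReal.ofReal_mul (exp_nonneg _), ← Real.exp_add]
    apply ENNReal.ofReal_le_ofReal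
    apply Real.exp_le_exp.2
    have hle : y ≤ y' := le_of_lt hy'
    nlinarith [mul_nonneg (mul_nonneg hα.le hy) (sub_nonneg.2 hle)]
  refine h1.trans ?_
  rw [lintegral_const_mul' _ _ ENNReal.ofReal_ne_top]
  have h2 : (∫⁻ y' in Ioi y, ENNReal.ofReal (exp (-(α * (y' - y) ^ 2))))
      ≤ ∫⁻ y' : ℝ, ENNReal.ofReal (exp (-(α * (y' - y) ^ 2))) :=
    setLIntegral_le_lintegral _ _
  have hint : Integrable (fun y' : ℝ => exp (-(α * (y' - y) ^ 2))) := by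
    have := (integrable_exp_neg_mul_sq hα).comp_sub_right y
    simpa [neg_mul] using this
  have h3 : (∫⁻ y' : ℝ, ENNReal.ofReal (exp (-(α * (y' - y) ^ 2))))
      = ENNReal.ofReal (Real.sqrt (π / α)) := by
    rw [← ofReal_integral_eq_lintegral_ofReal hint (ae_of_all _ fun x => exp_nonneg _)]
    congr 1
    have : (∫ y' : ℝ, exp (-(α * (y' - y) ^ 2)))
        = ∫ y' : ℝ, exp (-α * y' ^ 2) := by
      rw [← integral_sub_right_eq_self (fun z : ℝ => exp (-α * z ^ 2)) y]
      simp [neg_mul]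
    rw [this, integral_gaussian]
  calc ENNReal.ofReal (exp (-(α * y ^ 2))) * ∫⁻ y' in Ioi y,
        ENNReal.ofReal (exp (-(α * (y' - y) ^ 2)))
      ≤ ENNReal.ofReal (exp (-(α * y ^ 2))) * ENNReal.ofReal (Real.sqrt (π / α)) := by
        exact mul_le_mul' le_rfl (h3 ▸ h2)
    _ = ENNReal.ofReal (exp (-(α * y ^ 2)) * Real.sqrt (π / α)) :=
        (ENNReal.ofReal_mul (exp_nonneg _)).symm

/-- `e^{2w} u² = (‖e^w u‖₊)²` in `ℝ≥0∞`. -/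
lemma ofReal_exp_sq (w u : ℝ) :
    ENNReal.ofReal (exp (2 * w) * u ^ 2) = (‖exp w * u‖₊ : ℝ≥0∞) ^ 2 := by
  have h1 : exp (2 * w) = exp w ^ 2 := by
    rw [show (2 : ℝ) * w = (2 : ℕ) * w by norm_num, Real.exp_nat_mul]
  rw [← enorm_eq_nnnorm, Real.enorm_eq_ofReal_abs, ← ENNReal.ofReal_pow (abs_nonneg _), sq_abs, mul_pow, h1]

lemma half_rpow_sq (x : ℝ≥0∞) : (x ^ ((1 : ℝ) / 2)) ^ 2 = x := by
  rw [← ENNReal.rpow_natCast (x ^ ((1 : ℝ) / 2)) 2, ← ENNReal.rpow_mul]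
  norm_num

lemma en_rpow_two (x : ℝ≥0∞) : x ^ ((2 : ℝ)) = x ^ (2 : ℕ) := by
  rw [← ENNReal.rpow_natCast x 2]
  norm_num

lemma real_exp_two_mul (u : ℝ) : exp (2 * u) = exp u ^ 2 := by
  rw [← Real.exp_nat_mul]
  norm_num

/-- The pointwise (in `x`) trace bound. -/
lemma core_bound (a γ t y : ℝ) (ha : 0 < a) (ht : 0 ≤ t) (hy : 0 ≤ y) (hγ : γ ≤ a)
    (g : ℝ → ℝ)
    (hg : AEMeasurable (fun y' => exp (a * Psi t y') * g y') (volume.restrict (Ioi 0)))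
    (v : ℝ) (hv : v = -∫ y' in Ioi y, g y') :
    ENNReal.ofReal (exp (2 * γ * Psi t y) * v ^ 2)
      ≤ ENNReal.ofReal (2 * Real.sqrt (π / a) * Real.sqrt (1 + t)) *
        ∫⁻ y' in Ioi 0, ENNReal.ofReal (exp (2 * a * Psi t y') * g y' ^ 2) := by
  have h1t : (0 : ℝ) < 1 + t := by linarith
  set α : ℝ := a / (4 * (1 + t)) with hα_def
  have hα : 0 < α := by positivity
  have hPsi2 : ∀ z : ℝ, 2 * a * Psi t z = α * z ^ 2 := by
    intro z
    rw [Psi, hα_def]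
    field_simp
    ring
  set φ : ℝ → ℝ := fun y' => exp (a * Psi t y') * g y' with hφ_def
  set f : ℝ → ℝ≥0∞ := fun y' => ENNReal.ofReal (exp (-(a * Psi t y'))) with hf_def
  set h : ℝ → ℝ≥0∞ := fun y' => (‖φ y'‖₊ : ℝ≥0∞) with hh_def
  -- step A : pointwise factorization of the norm
  have hfh : ∀ y' : ℝ, (‖g y'‖₊ : ℝ≥0∞) = (f * h) y' := by
    intro y'
    simp only [Pi.mul_apply, hf_def, hh_def, hφ_def, ← enorm_eq_nnnorm, Real.enorm_eq_ofReal_abs]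
    rw [← ENNReal.ofReal_mul (exp_nonneg _)]
    congr 1
    rw [abs_mul, abs_exp, ← mul_assoc, ← Real.exp_add]
    simp
  have hAv : ENNReal.ofReal |v| ≤ ∫⁻ y' in Ioi y, (f * h) y' := by
    have : ENNReal.ofReal |v| = (‖∫ y' in Ioi y, g y'‖₊ : ℝ≥0∞) := by
      rw [hv, ← enorm_eq_nnnorm, Real.enorm_eq_ofReal_abs, abs_neg]
    rw [this]
    refine (enorm_integral_le_lintegral_enorm _).trans ?_
    exact lintegral_mono fun y' => (hfh y').le
  -- step B : Cauchy-Schwarz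
  have hpq : Real.HolderConjugate 2 2 := Real.holderConjugate_iff.mpr ⟨one_lt_two, by norm_num⟩
  have hfm : AEMeasurable f (volume.restrict (Ioi y)) := by
    have : Continuous fun y' : ℝ => exp (-(a * Psi t y')) := by
      unfold Psi
      exact Real.continuous_exp.comp
        ((continuous_const.mul ((continuous_pow 2).div_const _)).neg)
    exact (this.measurable.ennreal_ofReal).aemeasurable
  have hhm : AEMeasurable h (volume.restrict (Ioi y)) :=
    (hg.mono_measure (Measure.restrict_mono (Ioi_subset_Ioi hy) le_rfl)).enorm
  have hcs : (∫⁻ y' in Ioi y, (f * h) y')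
      ≤ (∫⁻ y' in Ioi y, f y' ^ (2 : ℝ)) ^ ((1 : ℝ) / 2) *
        (∫⁻ y' in Ioi y, h y' ^ (2 : ℝ)) ^ ((1 : ℝ) / 2) :=
    ENNReal.lintegral_mul_le_Lp_mul_Lq _ hpq hfm hhm
  -- step C : Gaussian tail for the first factor
  have hT : (∫⁻ y' in Ioi y, f y' ^ (2 : ℝ))
      ≤ ENNReal.ofReal (exp (-(α * y ^ 2)) * Real.sqrt (π / α)) := by
    have heq : ∀ y' : ℝ, f y' ^ (2 : ℝ) = ENNReal.ofReal (exp (-(α * y' ^ 2))) := by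
      intro y'
      simp only [hf_def]
      rw [en_rpow_two, ← ENNReal.ofReal_pow (exp_nonneg _)]
      congr 1
      rw [← real_exp_two_mul]
      congr 1
      rw [← hPsi2 y']
      ring
    simp_rw [heq]
    exact gauss_tail α y hα hy
  -- step D : the second factor is bounded by the full integral
  have hH : (∫⁻ y' in Ioi y, h y' ^ (2 : ℝ))
      ≤ ∫⁻ y' in Ioi 0, ENNReal.ofReal (exp (2 * a * Psi t y') * g y' ^ 2) := by
    have heq : ∀ y' : ℝ, h y' ^ (2 : ℝ)
        = ENNReal.ofReal (exp (2 * a * Psi t y') * g y' ^ 2) := by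
      intro y'
      simp only [hh_def, hφ_def]
      rw [en_rpow_two, show (2 * a * Psi t y') = 2 * (a * Psi t y') by ring, ofReal_exp_sq]
    simp_rw [heq]
    exact lintegral_mono' (Measure.restrict_mono (Ioi_subset_Ioi hy) le_rfl) le_rfl
  -- step E : combine
  set J : ℝ≥0∞ := ∫⁻ y' in Ioi 0, ENNReal.ofReal (exp (2 * a * Psi t y') * g y' ^ 2) with hJ_def
  set T : ℝ≥0∞ := ∫⁻ y' in Ioi y, f y' ^ (2 : ℝ) with hT_def
  set H : ℝ≥0∞ := ∫⁻ y' in Ioi y, h y' ^ (2 : ℝ) with hH_def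
  have hPsiNN : 0 ≤ Psi t y := by rw [Psi]; positivity
  have hstart : ENNReal.ofReal (exp (2 * γ * Psi t y) * v ^ 2)
      = (ENNReal.ofReal (exp (γ * Psi t y)) * ENNReal.ofReal |v|) ^ 2 := by
    rw [← ENNReal.ofReal_mul (exp_nonneg _), ← ENNReal.ofReal_pow (by positivity)]
    congr 1
    rw [mul_pow, sq_abs, show 2 * γ * Psi t y = 2 * (γ * Psi t y) by ring, real_exp_two_mul]
  have hVbound : ENNReal.ofReal |v| ≤ T ^ ((1 : ℝ) / 2) * H ^ ((1 : ℝ) / 2) :=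
    hAv.trans hcs
  have hmain : (ENNReal.ofReal (exp (γ * Psi t y)) * ENNReal.ofReal |v|) ^ 2
      ≤ ENNReal.ofReal (exp (γ * Psi t y)) ^ 2 * T * H := by
    calc (ENNReal.ofReal (exp (γ * Psi t y)) * ENNReal.ofReal |v|) ^ 2
        ≤ (ENNReal.ofReal (exp (γ * Psi t y)) * (T ^ ((1:ℝ)/2) * H ^ ((1:ℝ)/2))) ^ 2 := by
          exact pow_le_pow_left' (mul_le_mul' le_rfl hVbound) 2
      _ = ENNReal.ofReal (exp (γ * Psi t y)) ^ 2 * T * H := by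
          rw [mul_pow, mul_pow, half_rpow_sq, half_rpow_sq, mul_assoc]
  have hconst : ENNReal.ofReal (exp (γ * Psi t y)) ^ 2 * T
      ≤ ENNReal.ofReal (2 * Real.sqrt (π / a) * Real.sqrt (1 + t)) := by
    have hsqrt : Real.sqrt (π / α) = 2 * Real.sqrt (π / a) * Real.sqrt (1 + t) := by
      have hπa : (0 : ℝ) ≤ π / a := by positivity
      have : π / α = (2 * Real.sqrt (π / a) * Real.sqrt (1 + t)) ^ 2 := by
        rw [mul_pow, mul_pow, Real.sq_sqrt hπa, Real.sq_sqrt h1t.le, hα_def]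
        field_simp
        ring
      rw [this, Real.sqrt_sq (by positivity)]
    calc ENNReal.ofReal (exp (γ * Psi t y)) ^ 2 * T
        ≤ ENNReal.ofReal (exp (γ * Psi t y)) ^ 2 *
            ENNReal.ofReal (exp (-(α * y ^ 2)) * Real.sqrt (π / α)) :=
          mul_le_mul' le_rfl hT
      _ = ENNReal.ofReal (exp (γ * Psi t y) ^ 2 * (exp (-(α * y ^ 2)) * Real.sqrt (π / α))) := by
          rw [ENNReal.ofReal_mul (by positivity : (0:ℝ) ≤ rexp (γ * Psi t y) ^ 2),
            ENNReal.ofReal_mul (exp_nonneg (-(α * y ^ 2))),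
            ENNReal.ofReal_pow (exp_nonneg (γ * Psi t y))]
      _ ≤ ENNReal.ofReal (2 * Real.sqrt (π / a) * Real.sqrt (1 + t)) := by
          apply ENNReal.ofReal_le_ofReal
          rw [hsqrt]
          have hexp : exp (γ * Psi t y) ^ 2 * exp (-(α * y ^ 2)) ≤ 1 := by
            rw [show exp (γ * Psi t y) ^ 2 = exp (2 * γ * Psi t y) by
              rw [show 2 * γ * Psi t y = 2 * (γ * Psi t y) by ring, real_exp_two_mul]]
            rw [← Real.exp_add]
            apply Real.exp_le_one_iff.2
            have h2a : α * y ^ 2 = 2 * a * Psi t y := (hPsi2 y).symm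
            rw [h2a]
            have : 2 * γ * Psi t y ≤ 2 * a * Psi t y := by nlinarith
            linarith
          calc exp (γ * Psi t y) ^ 2 *
                (exp (-(α * y ^ 2)) * (2 * Real.sqrt (π / a) * Real.sqrt (1 + t)))
              = (exp (γ * Psi t y) ^ 2 * exp (-(α * y ^ 2))) *
                (2 * Real.sqrt (π / a) * Real.sqrt (1 + t)) := by ring
            _ ≤ 1 * (2 * Real.sqrt (π / a) * Real.sqrt (1 + t)) := by
                apply mul_le_mul_of_nonneg_right hexp (by positivity)
            _ = 2 * Real.sqrt (π / a) * Real.sqrt (1 + t) := one_mul _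
  calc ENNReal.ofReal (exp (2 * γ * Psi t y) * v ^ 2)
      = (ENNReal.ofReal (exp (γ * Psi t y)) * ENNReal.ofReal |v|) ^ 2 := hstart
    _ ≤ ENNReal.ofReal (exp (γ * Psi t y)) ^ 2 * T * H := hmain
    _ ≤ ENNReal.ofReal (2 * Real.sqrt (π / a) * Real.sqrt (1 + t)) * J :=
        mul_le_mul' hconst hH

/-- The weighted trace-type estimate (4.9): for `a, b, c > 0` with `c ≤ a + b`,
`‖e^{(c−b)Ψ(t,y)} A(·,y)‖_{L²_x} ≤ C ⟨t⟩^{1/4} ‖e^{aΨ} ∂_y A‖_{L²(ℝ²_+)}` for every `y ≥ 0`. -/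
theorem weighted_trace_estimate (a b c : ℝ) (ha : 0 < a) (hb : 0 < b) (hc : 0 < c)
    (hcab : c ≤ a + b) :
    ∃ C : ℝ, 0 < C ∧ ∀ t : ℝ, 0 ≤ t → ∀ A : ℝ → ℝ → ℝ,
      (∀ᵐ x ∂(volume : Measure ℝ), ContDiffOn ℝ 1 (A x) (Ici 0) ∧
        Tendsto (A x) atTop (𝓝 0) ∧
        ∀ y : ℝ, A x y = -∫ y' in Ioi y, deriv (A x) y') →
      MemLp (fun p : ℝ × ℝ => exp (a * Psi t p.2) * deriv (A p.1) p.2) 2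
        (volume.restrict halfPlane) →
      ∀ y : ℝ, 0 ≤ y →
        (∫⁻ x : ℝ, ENNReal.ofReal (exp (2 * (c - b) * Psi t y) * A x y ^ 2)) ^ ((1:ℝ)/2)
          ≤ ENNReal.ofReal (C * (1 + t) ^ ((1:ℝ)/4)) *
            (∫⁻ p in halfPlane,
              ENNReal.ofReal (exp (2 * a * Psi t p.2) * (deriv (A p.1) p.2) ^ 2)) ^ ((1:ℝ)/2) := by
  refine ⟨Real.sqrt (2 * Real.sqrt (π / a)), by positivity, ?_⟩
  intro t ht A hA hL2 y hy
  have h1t : (0 : ℝ) < 1 + t := by linarith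
  -- the restricted measure on the half-plane is a product measure
  have hset : halfPlane = (univ : Set ℝ) ×ˢ Ioi (0 : ℝ) := by
    ext p
    simp [halfPlane, Set.mem_prod]
  have hmeas_eq : (volume : Measure (ℝ × ℝ)).restrict halfPlane
      = (volume : Measure ℝ).prod (volume.restrict (Ioi (0 : ℝ))) := by
    rw [hset, Measure.volume_eq_prod, ← Measure.prod_restrict, Measure.restrict_univ]
  set φ : ℝ × ℝ → ℝ := fun p => exp (a * Psi t p.2) * deriv (A p.1) p.2 with hφ_def
  have hφm : AEMeasurable φ ((volume : Measure ℝ).prod (volume.restrict (Ioi (0 : ℝ)))) := by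
    have := hL2.1.aemeasurable
    rwa [hmeas_eq] at this
  -- a.e. section measurability
  have hsec : ∀ᵐ x ∂(volume : Measure ℝ),
      AEMeasurable (fun y' => exp (a * Psi t y') * deriv (A x) y')
        (volume.restrict (Ioi (0 : ℝ))) := by
    obtain ⟨φm, hφm', hae⟩ := hφm
    filter_upwards [Measure.ae_ae_of_ae_prod hae] with x hx
    have hx' : (fun y' => φm (x, y')) =ᶠ[ae (volume.restrict (Ioi (0:ℝ)))]
        (fun y' => φ (x, y')) := Filter.EventuallyEq.symm hx
    exact ((hφm'.comp measurable_prodMk_left).aemeasurable).congr hx'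
  -- pointwise (in x) bound
  set K : ℝ := 2 * Real.sqrt (π / a) * Real.sqrt (1 + t) with hK_def
  have key : ∀ᵐ x ∂(volume : Measure ℝ),
      ENNReal.ofReal (exp (2 * (c - b) * Psi t y) * A x y ^ 2)
        ≤ ENNReal.ofReal K *
          ∫⁻ y' in Ioi 0, ENNReal.ofReal (exp (2 * a * Psi t y') * deriv (A x) y' ^ 2) := by
    filter_upwards [hA, hsec] with x hx hmx
    exact core_bound a (c - b) t y ha ht hy (by linarith) (deriv (A x)) hmx (A x y)
      (hx.2.2 y)
  -- Tonelli
  set F : ℝ × ℝ → ℝ≥0∞ :=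
    fun p => ENNReal.ofReal (exp (2 * a * Psi t p.2) * deriv (A p.1) p.2 ^ 2) with hF_def
  have hFeq : F = fun p => (‖φ p‖₊ : ℝ≥0∞) ^ 2 := by
    funext p
    rw [hF_def, hφ_def]
    simp only
    rw [show (2 * a * Psi t p.2) = 2 * (a * Psi t p.2) by ring, ofReal_exp_sq]
  have hFm : AEMeasurable F ((volume : Measure ℝ).prod (volume.restrict (Ioi (0 : ℝ)))) := by
    rw [hFeq]
    exact hφm.enorm.pow_const 2
  have hTonelli : (∫⁻ p in halfPlane, F p)
      = ∫⁻ x, ∫⁻ y' in Ioi 0, F (x, y') := by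
    rw [hmeas_eq]
    exact lintegral_prod F hFm
  -- put it together
  have hinteg : (∫⁻ x : ℝ, ENNReal.ofReal (exp (2 * (c - b) * Psi t y) * A x y ^ 2))
      ≤ ENNReal.ofReal K * ∫⁻ p in halfPlane, F p := by
    calc (∫⁻ x : ℝ, ENNReal.ofReal (exp (2 * (c - b) * Psi t y) * A x y ^ 2))
        ≤ ∫⁻ x, ENNReal.ofReal K * ∫⁻ y' in Ioi 0, F (x, y') := lintegral_mono_ae key
      _ = ENNReal.ofReal K * ∫⁻ x, ∫⁻ y' in Ioi 0, F (x, y') :=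
          lintegral_const_mul' _ _ ENNReal.ofReal_ne_top
      _ = ENNReal.ofReal K * ∫⁻ p in halfPlane, F p := by rw [hTonelli]
  have hfinal : ((∫⁻ x : ℝ, ENNReal.ofReal (exp (2 * (c - b) * Psi t y) * A x y ^ 2))
        : ℝ≥0∞) ^ ((1:ℝ)/2)
      ≤ (ENNReal.ofReal K) ^ ((1:ℝ)/2) * (∫⁻ p in halfPlane, F p) ^ ((1:ℝ)/2) := by
    calc ((∫⁻ x : ℝ, ENNReal.ofReal (exp (2 * (c - b) * Psi t y) * A x y ^ 2))
          : ℝ≥0∞) ^ ((1:ℝ)/2)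
        ≤ (ENNReal.ofReal K * ∫⁻ p in halfPlane, F p) ^ ((1:ℝ)/2) :=
          ENNReal.rpow_le_rpow hinteg (by norm_num)
      _ = (ENNReal.ofReal K) ^ ((1:ℝ)/2) * (∫⁻ p in halfPlane, F p) ^ ((1:ℝ)/2) :=
          ENNReal.mul_rpow_of_nonneg _ _ (by norm_num)
  refine hfinal.trans ?_
  apply mul_le_mul' ?_ le_rfl
  -- constant comparison
  rw [ENNReal.ofReal_rpow_of_nonneg (by positivity) (by norm_num)]
  apply ENNReal.ofReal_le_ofReal
  rw [hK_def, ← Real.sqrt_eq_rpow]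
  rw [Real.sqrt_mul (by positivity) (Real.sqrt (1 + t))]
  apply mul_le_mul_of_nonneg_left ?_ (Real.sqrt_nonneg _)
  rw [Real.sqrt_eq_rpow, Real.sqrt_eq_rpow, ← Real.rpow_mul h1t.le]
  norm_num
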